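/- With f_k := ∏_{(α₁,...,α_{k−1}) ∈ F_q^{k−1}} (z_k + α_{k−1}z_{k−1} + ... + α₁z₁) in F_q[z₁,...,zₙ], the exterior derivative df_k is divisible by ∏_{i<k} f_i^{q−2}; more precisely, z_i^{q−2} divides ∂f_k/∂z_l for all i < k and all l, and ∂f_k/∂z_k equals ∏_{i<k} f_i^{q−1} up to a nonzero scalar. -/

import Mathlib

open MvPolynomial

abbrev GLn (F : Type*) [Field F] (n : ℕ) := (Fin n → F) ≃ₗ[F] (Fin n → F)

variable {F : Type*} [Field F] {n : ℕ}

/-- Matrix of the contragredient action of `g` on the coordinate functions: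
`g · z_i = ∑ j (actMat g i j) z_j`. -/
noncomputable def actMat (g : GLn F n) : Matrix (Fin n) (Fin n) F :=
  Matrix.of fun i j => g.symm (Pi.single j 1) i

/-- Action of `g ∈ GL(V)` on polynomials `F[V]` (contragredient action). -/
noncomputable def polyAct (g : GLn F n) : MvPolynomial (Fin n) F →ₐ[F] MvPolynomial (Fin n) F :=
  aeval fun i => ∑ j, C (actMat g i j) * X j

/-- The degree-one polynomial corresponding to a linear form on `V`. -/
noncomputable def linToPoly (z : (Fin n → F) →ₗ[F] F) : MvPolynomial (Fin n) F :=
  ∑ j, C (z (Pi.single j 1)) * X j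

/-- The invariant ring `F[V]^G` as a subalgebra of `F[V]`. -/
noncomputable def invSub (G : Subgroup (GLn F n)) : Subalgebra F (MvPolynomial (Fin n) F) where
  carrier := {f | ∀ g ∈ G, polyAct g f = f}
  add_mem' := fun {a b} ha hb g hg => by rw [map_add, ha g hg, hb g hg]
  mul_mem' := fun {a b} ha hb g hg => by rw [map_mul, ha g hg, hb g hg]
  algebraMap_mem' := fun r g hg => (polyAct g).commutes r

/-- Action of `g` on a differential 1-form `ω = ∑ i (w i) dz_i`; the result is the
coefficient vector of `g · ω`. -/
noncomputable def oneFormAct (g : GLn F n) (w : Fin n → MvPolynomial (Fin n) F) :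
    Fin n → MvPolynomial (Fin n) F :=
  fun j => ∑ i, polyAct g (w i) * C (actMat g i j)

/-- The coefficient of `dz_J` in `g · dz_I` (a minor determinant of `actMat g`). -/
noncomputable def minorDet (g : GLn F n) (I J : Finset (Fin n)) : F :=
  if h : J.card = I.card then
    Matrix.det (Matrix.of fun a b : Fin I.card =>
      actMat g (I.orderIsoOfFin rfl a) (J.orderIsoOfFin h b))
  else 0

/-- Action of `g` on a differential form `μ = ∑_I u_I dz_I`, given by its coefficient
function `u : Finset (Fin n) → F[V]`. -/
noncomputable def formAct (g : GLn F n) (u : Finset (Fin n) → MvPolynomial (Fin n) F) :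
    Finset (Fin n) → MvPolynomial (Fin n) F :=
  fun J => ∑ I : Finset (Fin n), polyAct g (u I) * C (minorDet g I J)

/-- The sign arising when wedging `dz_I ∧ dz_J` into `dz_(I ∪ J)` for disjoint `I`, `J`. -/
def wsign (I J : Finset (Fin n)) : ℤ :=
  (-1) ^ ((I ×ˢ J).filter fun p => p.2 < p.1).card

/-- Wedge product of differential forms in terms of coefficient functions. -/
noncomputable def wedgeF (u v : Finset (Fin n) → MvPolynomial (Fin n) F) :
    Finset (Fin n) → MvPolynomial (Fin n) F :=
  fun K => ∑ I ∈ K.powerset, wsign I (K \ I) • (u I * v (K \ I))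

/-- The constant 0-form `1`. -/
noncomputable def unitForm : Finset (Fin n) → MvPolynomial (Fin n) F :=
  fun S => if S = ∅ then 1 else 0

/-- Iterated wedge product of a list of forms. -/
noncomputable def iterWedge (L : List (Finset (Fin n) → MvPolynomial (Fin n) F)) :
    Finset (Fin n) → MvPolynomial (Fin n) F :=
  L.foldr wedgeF unitForm

/-- A 1-form, viewed as a differential form via its coefficient function. -/
noncomputable def oneToForm (w : Fin n → MvPolynomial (Fin n) F) :
    Finset (Fin n) → MvPolynomial (Fin n) F :=
  fun S => if h : S.card = 1 then w (S.min' (Finset.card_pos.mp (by omega))) else 0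

/-- The fixed space of `g` in `V`. -/
noncomputable def fixedSpace (g : GLn F n) : Submodule F (Fin n → F) :=
  LinearMap.ker (g.toLinearMap - LinearMap.id)

/-- A reflection: an element of finite order whose fixed space is a hyperplane. -/
def IsReflection (g : GLn F n) : Prop :=
  IsOfFinOrder g ∧ Module.finrank F (fixedSpace g) = n - 1

/-- A transvection: a (necessarily nondiagonalizable) reflection of determinant one. -/
def IsTransvection (g : GLn F n) : Prop :=
  IsReflection g ∧ LinearMap.det g.toLinearMap = 1 ∧ g ≠ 1

/-- The pointwise stabilizer `G_H` of a subspace `H` in `G`. -/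
def pointStab (G : Subgroup (GLn F n)) (H : Submodule F (Fin n → F)) : Subgroup (GLn F n) where
  carrier := {g | g ∈ G ∧ ∀ v ∈ H, g v = v}
  one_mem' := ⟨G.one_mem, fun v _ => rfl⟩
  mul_mem' := fun {a b} ha hb => ⟨G.mul_mem ha.1 hb.1, fun v hv => by
    show a (b v) = v
    rw [hb.2 v hv, ha.2 v hv]⟩
  inv_mem' := fun {a} ha => ⟨G.inv_mem ha.1, fun v hv => by
    show a.symm v = v
    conv_lhs => rw [← ha.2 v hv]
    exact a.symm_apply_apply v⟩

/-- `K_H`: the subgroup of `G_H` of elements of determinant one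
(the transvections in `G_H` together with the identity). -/
noncomputable def KH (G : Subgroup (GLn F n)) (H : Submodule F (Fin n → F)) :
    Subgroup (GLn F n) :=
  pointStab G H ⊓ MonoidHom.ker LinearEquiv.det

/-- `e_H = |G_H : K_H|`. -/
noncomputable def eH (G : Subgroup (GLn F n)) (H : Submodule F (Fin n → F)) : ℕ :=
  ((KH G H).subgroupOf (pointStab G H)).index

/-- The transvection root space of `G_H`: the span of the root vectors of the
transvections in `G_H` (the root vector of `t` spans the range of `t - 1`). -/
noncomputable def trvSpace (G : Subgroup (GLn F n)) (H : Submodule F (Fin n → F)) :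
    Submodule F (Fin n → F) :=
  ⨆ g ∈ {g : GLn F n | g ∈ pointStab G H ∧ IsTransvection g},
    LinearMap.range (g.toLinearMap - LinearMap.id)

/-- `b_H`: the dimension of the transvection root space of `G_H`. -/
noncomputable def bH (G : Subgroup (GLn F n)) (H : Submodule F (Fin n → F)) : ℕ :=
  Module.finrank F (trvSpace G H)

/-- The basic invariant `f_k` of the unipotent group (indices 0-based). -/
noncomputable def unipBasic (F : Type*) [Field F] [Fintype F] (n : ℕ) (k : Fin n) :
    MvPolynomial (Fin n) F :=
  ∏ α : Fin (k : ℕ) → F,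
    (X k + ∑ i : Fin (k : ℕ), C (α i) * X (Fin.castLE k.isLt.le i))


section Stmt14Aux
set_option linter.unusedSectionVars false
open Finset
variable [Fintype F]

theorem prodXsubC {K : Type*} [Field K] [Fintype K] :
    (Polynomial.X ^ Fintype.card K - Polynomial.X : Polynomial K)
      = ∏ a : K, (Polynomial.X - Polynomial.C a) := by
  have hroots := FiniteField.roots_X_pow_card_sub_X K
  have hdeg : (Polynomial.X ^ Fintype.card K - Polynomial.X : Polynomial K).natDegree
      = Fintype.card K :=
    FiniteField.X_pow_card_sub_X_natDegree_eq K Fintype.one_lt_card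
  have hsplits : Polynomial.Splits
      (Polynomial.X ^ Fintype.card K - Polynomial.X : Polynomial K) := by
    rw [Polynomial.splits_iff_card_roots, hroots, hdeg]; simp [Finset.card_univ]
  have hm : (Polynomial.X ^ Fintype.card K - Polynomial.X : Polynomial K).Monic := by
    have h1 : (1:ℕ) < Fintype.card K := Fintype.one_lt_card
    have : ((Polynomial.X : Polynomial K)).degree
        < ((Polynomial.X : Polynomial K) ^ Fintype.card K).degree := by
      rw [Polynomial.degree_X, Polynomial.degree_X_pow]; exact_mod_cast h1
    exact (Polynomial.monic_X_pow _).sub_of_left this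
  have := Polynomial.Splits.eq_prod_roots_of_monic hsplits hm
  rw [hroots] at this; rw [this]; rfl

theorem prod_add_embed {F : Type*} [Field F] [Fintype F] {S : Type*} [CommRing S]
    (φ : F →+* S) (t : S) : ∏ c : F, (t + φ c) = t ^ Fintype.card F - t := by
  have h1 : ∏ c : F, (t + φ c) = ∏ c : F, (t - φ c) := by
    rw [← Fintype.prod_equiv (Equiv.neg F) _ (fun c => t + φ c) (fun c => rfl)]
    simp [sub_eq_add_neg]
  have h2 := congrArg (Polynomial.eval₂RingHom φ t) prodXsubC
  rw [map_sub, map_pow, map_prod] at h2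
  simp only [Polynomial.coe_eval₂RingHom, Polynomial.eval₂_sub,
    Polynomial.eval₂_C, Polynomial.eval₂_X] at h2
  rw [h1, ← h2]

/-- The key identity: `∏_{c ∈ F} (A + c·B) = A^q − B^(q−1)·A`. -/
theorem prod_add_C_mul {F : Type*} [Field F] [Fintype F] {n : ℕ} (A B : MvPolynomial (Fin n) F) :
    ∏ c : F, (A + MvPolynomial.C c * B)
      = A ^ Fintype.card F - B ^ (Fintype.card F - 1) * A := by
  have hq1 : 1 < Fintype.card F := Fintype.one_lt_card
  rcases eq_or_ne B 0 with rfl | hB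
  · simp [zero_pow (by omega : Fintype.card F - 1 ≠ 0)]
  · have hinj : Function.Injective (algebraMap (MvPolynomial (Fin n) F)
        (FractionRing (MvPolynomial (Fin n) F))) :=
      IsFractionRing.injective _ _
    set ι := algebraMap (MvPolynomial (Fin n) F) (FractionRing (MvPolynomial (Fin n) F))
    apply hinj
    have hBne : ι B ≠ 0 := fun h => hB (hinj (by simpa using h))
    have key : ∀ c : F, ι (A + MvPolynomial.C c * B)
        = (ι A * (ι B)⁻¹ + (ι.comp MvPolynomial.C) c) * ι B := by
      intro c
      rw [ι.map_add, ι.map_mul, RingHom.comp_apply]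
      field_simp
    rw [map_prod]
    simp only [key]
    rw [Finset.prod_mul_distrib, Finset.prod_const,
      prod_add_embed (ι.comp MvPolynomial.C) (ι A * (ι B)⁻¹), Finset.card_univ]
    rw [ι.map_sub, ι.map_mul, ι.map_pow, ι.map_pow]
    obtain ⟨r, hr⟩ : ∃ r, Fintype.card F = r + 1 := ⟨_, (Nat.succ_pred_eq_of_pos (by omega)).symm⟩
    rw [hr]
    simp only [Nat.add_sub_cancel]
    rw [mul_pow, inv_pow]
    field_simp
    ring

noncomputable def Lf (α : Fin n → F) : MvPolynomial (Fin n) F := ∑ j, C (α j) * X j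

noncomputable def Sm (F : Type*) [Field F] [Fintype F] (n m : ℕ) : Finset (Fin n → F) :=
  @Finset.filter _ (fun α => ∀ j : Fin n, m ≤ (j : ℕ) → α j = 0)
    (Classical.decPred _) Finset.univ

noncomputable def Pm (m : ℕ) (t : MvPolynomial (Fin n) F) : MvPolynomial (Fin n) F :=
  ∏ α ∈ Sm F n m, (t + Lf α)

theorem mem_Sm {m : ℕ} {α : Fin n → F} : α ∈ Sm F n m ↔ ∀ j : Fin n, m ≤ (j : ℕ) → α j = 0 := by
  rw [Sm]
  rw [@Finset.mem_filter _ _ (Classical.decPred _)]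
  simp

theorem Lf_add (α β : Fin n → F) : Lf (α + β) = Lf α + Lf β := by
  simp [Lf, add_mul, Finset.sum_add_distrib]

theorem Lf_single (e : Fin n) (c : F) : Lf (Pi.single e c) = C c * X e := by
  rw [Lf, Finset.sum_eq_single e]
  · simp
  · intro j _ hj; rw [Pi.single_eq_of_ne hj]; simp
  · simp

theorem Pm_zero (t : MvPolynomial (Fin n) F) : Pm 0 t = t := by
  have : Sm F n 0 = {0} := by
    ext α
    simp only [mem_Sm, Finset.mem_singleton]
    constructor
    · intro h; funext j; exact h j (Nat.zero_le _)
    · rintro rfl j _; rfl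
  rw [Pm, this]
  simp [Lf]

theorem Pm_succ_raw {m : ℕ} (hm : m < n) (t : MvPolynomial (Fin n) F) :
    Pm (m + 1) t = ∏ c : F, Pm m (t + C c * X ⟨m, hm⟩) := by
  have h1 : ∀ c : F, Pm m (t + C c * X ⟨m, hm⟩)
      = ∏ α ∈ Sm F n m, (t + Lf (α + Pi.single (⟨m, hm⟩ : Fin n) c)) := by
    intro c
    rw [Pm]
    refine Finset.prod_congr rfl fun α _ => ?_
    rw [Lf_add, Lf_single]; ring
  simp only [h1]
  rw [← Finset.prod_product']
  rw [Pm]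
  refine Finset.prod_nbij' (fun α => (α ⟨m, hm⟩, α - Pi.single (⟨m, hm⟩ : Fin n) (α ⟨m, hm⟩)))
    (fun p => p.2 + Pi.single (⟨m, hm⟩ : Fin n) p.1) ?_ ?_ ?_ ?_ ?_
  · intro α hα
    rw [mem_Sm] at hα
    simp only [Finset.mem_product, Finset.mem_univ, true_and, mem_Sm]
    intro j hj
    rw [Pi.sub_apply]
    rcases eq_or_ne j ⟨m, hm⟩ with rfl | hne
    · rw [Pi.single_eq_same, sub_self]
    · rw [Pi.single_eq_of_ne hne, sub_zero]
      refine hα j ?_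
      have : (j : ℕ) ≠ m := fun h => hne (Fin.ext h)
      omega
  · intro p hp
    rw [Finset.mem_product] at hp
    have h2 := mem_Sm.mp hp.2
    rw [mem_Sm]
    intro j hj
    have hne : j ≠ ⟨m, hm⟩ := by
      intro h
      have : (j : ℕ) = m := by rw [h]
      omega
    rw [Pi.add_apply, Pi.single_eq_of_ne hne, add_zero]
    exact h2 j (Nat.le_of_succ_le hj)
  · intro α hα
    dsimp only
    exact sub_add_cancel _ _
  · intro p hp
    rw [Finset.mem_product] at hp
    have hzero : p.2 ⟨m, hm⟩ = 0 := (mem_Sm.mp hp.2) _ (le_refl m)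
    have key1 : ((p.2 + Pi.single (⟨m, hm⟩ : Fin n) p.1 : Fin n → F)) ⟨m, hm⟩ = p.1 := by
      rw [Pi.add_apply, hzero, Pi.single_eq_same, zero_add]
    rw [Prod.ext_iff]
    refine ⟨key1, ?_⟩
    rw [key1]
    exact add_sub_cancel_right _ _
  · intro α hα
    dsimp only
    rw [sub_add_cancel]
-- char facts
theorem frobq (x y : MvPolynomial (Fin n) F) :
    (x + y) ^ Fintype.card F = x ^ Fintype.card F + y ^ Fintype.card F := by
  obtain ⟨p, hchar⟩ := CharP.exists F
  haveI := hchar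
  haveI : Fact p.Prime := ⟨(CharP.char_is_prime F p)⟩
  obtain ⟨e, hp, hcard⟩ := FiniteField.card F p
  haveI : CharP (MvPolynomial (Fin n) F) p := inferInstance
  rw [hcard]
  exact add_pow_char_pow x y p e

theorem pow_card_self (c : F) : c ^ Fintype.card F = c := FiniteField.pow_card c

/-- Joint additivity and `F`-linearity of `Pm m`. -/
theorem Pm_addScal : ∀ m, m ≤ n →
    (∀ t s : MvPolynomial (Fin n) F, Pm m (t + s) = Pm m t + Pm m s) ∧
    (∀ (c : F) (t : MvPolynomial (Fin n) F), Pm m (C c * t) = C c * Pm m t) := by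
  intro m
  induction m with
  | zero => exact fun _ => ⟨fun t s => by rw [Pm_zero, Pm_zero, Pm_zero],
      fun c t => by rw [Pm_zero, Pm_zero]⟩
  | succ m ih =>
    intro hm1
    have hm : m < n := hm1
    obtain ⟨ihadd, ihscal⟩ := ih (le_of_lt hm)
    have hrec : ∀ t : MvPolynomial (Fin n) F, Pm (m + 1) t
        = Pm m t ^ Fintype.card F
          - Pm m (X ⟨m, hm⟩) ^ (Fintype.card F - 1) * Pm m t := by
      intro t
      rw [Pm_succ_raw hm t]
      have : ∀ c : F, Pm m (t + C c * X ⟨m, hm⟩) = Pm m t + C c * Pm m (X ⟨m, hm⟩) := by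
        intro c
        rw [ihadd, ihscal]
      simp only [this]
      exact prod_add_C_mul _ _
    constructor
    · intro t s
      rw [hrec, hrec, hrec, ihadd, frobq]
      ring
    · intro c t
      rw [hrec, hrec, ihscal, mul_pow]
      rw [show (C c : MvPolynomial (Fin n) F) ^ Fintype.card F = C c from by
        rw [← map_pow, pow_card_self c]]
      ring

theorem Pm_succ {m : ℕ} (hm : m < n) (t : MvPolynomial (Fin n) F) :
    Pm (m + 1) t = Pm m t ^ Fintype.card F
      - Pm m (X ⟨m, hm⟩) ^ (Fintype.card F - 1) * Pm m t := by
  obtain ⟨ihadd, ihscal⟩ := Pm_addScal (F := F) (n := n) m (le_of_lt hm)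
  rw [Pm_succ_raw hm t]
  have : ∀ c : F, Pm m (t + C c * X ⟨m, hm⟩) = Pm m t + C c * Pm m (X ⟨m, hm⟩) := by
    intro c; rw [ihadd, ihscal]
  simp only [this]
  exact prod_add_C_mul _ _
theorem card_cast_zero : ((Fintype.card F : ℕ) : MvPolynomial (Fin n) F) = 0 := by
  have h : ((Fintype.card F : ℕ) : F) = 0 := FiniteField.cast_card_eq_zero F
  rw [← map_natCast (C : F →+* MvPolynomial (Fin n) F), h, map_zero]

theorem qsub1_cast : (((Fintype.card F - 1 : ℕ)) : MvPolynomial (Fin n) F) = -1 := by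
  have h1 : 1 ≤ Fintype.card F := Fintype.card_pos
  rw [Nat.cast_sub h1, card_cast_zero, Nat.cast_one, zero_sub]

theorem pderiv_Pm_zero (l : Fin n) : ∀ m, m ≤ (l : ℕ) →
    ∀ t : MvPolynomial (Fin n) F, pderiv l t = 0 → pderiv l (Pm m t) = 0 := by
  intro m
  induction m with
  | zero => intro _ t ht; rwa [Pm_zero]
  | succ m ih =>
    intro hm1 t ht
    have hml : m ≤ (l : ℕ) := Nat.le_of_succ_le hm1
    have hmn : m < n := lt_of_le_of_lt hml l.isLt
    have hX : pderiv l (X (⟨m, hmn⟩ : Fin n) : MvPolynomial (Fin n) F) = 0 :=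
      pderiv_X_of_ne (by intro h; rw [Fin.ext_iff] at h; simp at h; omega)
    rw [Pm_succ hmn, map_sub, pderiv_pow, pderiv_mul, pderiv_pow,
      ih hml t ht, ih hml _ hX]
    ring

noncomputable def fB (F : Type*) [Field F] [Fintype F] (n : ℕ) (m : ℕ) :
    MvPolynomial (Fin n) F :=
  if h : m < n then Pm m (X ⟨m, h⟩) else 1

theorem key_dvd : ∀ m, m ≤ n → ∀ (κ l : Fin n),
    (∏ i ∈ Finset.range m, fB F n i ^ (Fintype.card F - 2)) ∣ pderiv l (Pm m (X κ)) := by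
  intro m
  induction m with
  | zero => intro _ κ l; simp
  | succ m ih =>
    intro hm1 κ l
    have hm : m < n := hm1
    have hq2 : 2 ≤ Fintype.card F := Fintype.one_lt_card
    obtain ⟨u, hu⟩ := ih (le_of_lt hm) ⟨m, hm⟩ l
    obtain ⟨v, hv⟩ := ih (le_of_lt hm) κ l
    have hfB : fB F n m = Pm m (X ⟨m, hm⟩) := dif_pos hm
    rw [Pm_succ hm, map_sub, pderiv_pow, pderiv_mul, pderiv_pow, card_cast_zero,
      qsub1_cast, hu, hv, Finset.prod_range_succ, hfB]
    have he : Fintype.card F - 1 = (Fintype.card F - 2) + 1 := by omega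
    have he2 : Fintype.card F - 1 - 1 = Fintype.card F - 2 := by omega
    rw [he2, he]
    refine ⟨u * Pm m (X κ) - Pm m (X ⟨m, hm⟩) * v, ?_⟩
    ring

theorem key_exact (k : Fin n) : ∀ m, m ≤ (k : ℕ) →
    pderiv k (Pm m (X k)) = C ((-1 : F) ^ m)
      * ∏ i ∈ Finset.range m, fB F n i ^ (Fintype.card F - 1) := by
  intro m
  induction m with
  | zero => simp [Pm_zero]
  | succ m ih =>
    intro hm1
    have hmk : m ≤ (k : ℕ) := Nat.le_of_succ_le hm1
    have hmn : m < n := lt_of_le_of_lt hmk k.isLt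
    have hX : pderiv k (X (⟨m, hmn⟩ : Fin n) : MvPolynomial (Fin n) F) = 0 :=
      pderiv_X_of_ne (by intro h; rw [Fin.ext_iff] at h; simp at h; omega)
    have hb : pderiv k (Pm m (X (⟨m, hmn⟩ : Fin n))) = 0 :=
      pderiv_Pm_zero k m hmk _ hX
    have hfB : fB F n m = Pm m (X ⟨m, hmn⟩) := dif_pos hmn
    rw [Pm_succ hmn, map_sub, pderiv_pow, pderiv_mul, pderiv_pow, card_cast_zero,
      hb, ih hmk, Finset.prod_range_succ, hfB, pow_succ]
    rw [map_mul, map_neg, map_one]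
    ring
theorem unip_eq (k : Fin n) : unipBasic F n k = Pm (k : ℕ) (X k) := by
  rw [unipBasic, Pm]
  have hLf : ∀ α : Fin (k : ℕ) → F,
      Lf (fun j : Fin n => if h : (j : ℕ) < (k : ℕ) then α ⟨j, h⟩ else 0)
        = ∑ i : Fin (k : ℕ), C (α i) * X (Fin.castLE k.isLt.le i) := by
    intro α
    rw [Lf]
    rw [← Finset.sum_filter_of_ne (p := fun j : Fin n => (j : ℕ) < (k : ℕ))
      (fun x _ hx => by
        by_contra hpx
        rw [dif_neg hpx] at hx
        simp at hx)]
    refine Finset.sum_bij'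
      (fun j hj => (⟨(j : ℕ), (Finset.mem_filter.mp hj).2⟩ : Fin (k : ℕ)))
      (fun i _ => Fin.castLE k.isLt.le i) ?_ ?_ ?_ ?_ ?_
    · intro a ha; exact Finset.mem_univ _
    · intro a ha
      refine Finset.mem_filter.mpr ⟨Finset.mem_univ _, ?_⟩
      simpa using a.isLt
    · intro a ha; exact Fin.ext rfl
    · intro a ha; exact Fin.ext rfl
    · intro a ha
      have h := (Finset.mem_filter.mp ha).2
      rw [dif_pos h]
      rfl
  refine Finset.prod_bij'
    (fun (α : Fin (k : ℕ) → F) _ =>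
      fun j : Fin n => if h : (j : ℕ) < (k : ℕ) then α ⟨j, h⟩ else 0)
    (fun β _ => fun i : Fin (k : ℕ) => β (Fin.castLE k.isLt.le i)) ?_ ?_ ?_ ?_ ?_
  · intro α _
    refine mem_Sm.mpr fun j hj => ?_
    rw [dif_neg (by omega)]
  · intro β _; exact Finset.mem_univ _
  · intro α _
    dsimp only
    funext i
    rw [dif_pos (by simpa using i.isLt)]
    exact congrArg α (Fin.ext rfl)
  · intro β hβ
    dsimp only
    funext j
    by_cases h : (j : ℕ) < (k : ℕ)
    · rw [dif_pos h]
      exact congrArg β (Fin.ext rfl)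
    · rw [dif_neg h]
      exact ((mem_Sm.mp hβ) j (by omega)).symm
  · intro α _
    rw [hLf α]

theorem fB_eq_unip (i : Fin n) : fB F n (i : ℕ) = unipBasic F n i := by
  rw [unip_eq, fB, dif_pos i.isLt]

theorem prod_filter_range (k : Fin n) (e : ℕ) :
    ∏ i ∈ Finset.univ.filter (· < k), unipBasic F n i ^ e
      = ∏ m ∈ Finset.range (k : ℕ), fB F n m ^ e := by
  refine Finset.prod_bij' (fun i _ => (i : ℕ))
    (fun m hm => (⟨m, lt_trans (Finset.mem_range.mp hm) k.isLt⟩ : Fin n)) ?_ ?_ ?_ ?_ ?_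
  · intro i hi
    have := (Finset.mem_filter.mp hi).2
    exact Finset.mem_range.mpr (by exact_mod_cast this)
  · intro m hm
    refine Finset.mem_filter.mpr ⟨Finset.mem_univ _, ?_⟩
    have := Finset.mem_range.mp hm
    exact_mod_cast this
  · intro i _; exact Fin.ext rfl
  · intro m _; rfl
  · intro i _
    rw [fB_eq_unip]

theorem X_dvd_unip (i : Fin n) : (X i : MvPolynomial (Fin n) F) ∣ unipBasic F n i := by
  rw [unip_eq, Pm]
  have h0 : (0 : Fin n → F) ∈ Sm F n (i : ℕ) := mem_Sm.mpr fun j _ => rfl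
  have := Finset.dvd_prod_of_mem (fun α => X i + Lf α) h0
  simpa [Lf] using this


end Stmt14Aux

/-- `z_i^{q-2}` divides `∂f_k/∂z_l` for all `i < k` and all `l`, so
`∏_{i<k} f_i^{q-2}` divides `df_k`; moreover `∂f_k/∂z_k ≐ ∏_{i<k} f_i^{q-1}`. -/
theorem stmt14 {F : Type*} [Field F] [Fintype F] (hodd : ringChar F ≠ 2) {n : ℕ}
    (k : Fin n) :
    (∀ i l : Fin n, i < k →
      (X i : MvPolynomial (Fin n) F) ^ (Fintype.card F - 2) ∣ pderiv l (unipBasic F n k)) ∧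
    (∀ l : Fin n,
      (∏ i ∈ Finset.univ.filter (· < k), unipBasic F n i ^ (Fintype.card F - 2)) ∣
        pderiv l (unipBasic F n k)) ∧
    (∃ c : F, c ≠ 0 ∧ pderiv k (unipBasic F n k) =
      C c * ∏ i ∈ Finset.univ.filter (· < k), unipBasic F n i ^ (Fintype.card F - 1)) := by
  have part2 : ∀ l : Fin n,
      (∏ i ∈ Finset.univ.filter (· < k), unipBasic F n i ^ (Fintype.card F - 2)) ∣
        pderiv l (unipBasic F n k) := by
    intro l
    rw [unip_eq, prod_filter_range]
    exact key_dvd (k : ℕ) k.isLt.le k l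
  refine ⟨?_, part2, ?_⟩
  · intro i l hik
    have h1 : (X i : MvPolynomial (Fin n) F) ^ (Fintype.card F - 2)
        ∣ unipBasic F n i ^ (Fintype.card F - 2) :=
      pow_dvd_pow_of_dvd (X_dvd_unip i) _
    have h2 : unipBasic F n i ^ (Fintype.card F - 2)
        ∣ ∏ j ∈ Finset.univ.filter (· < k), unipBasic F n j ^ (Fintype.card F - 2) :=
      Finset.dvd_prod_of_mem (fun j => unipBasic F n j ^ (Fintype.card F - 2))
        (Finset.mem_filter.mpr ⟨Finset.mem_univ _, hik⟩)
    exact h1.trans (h2.trans (part2 l))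
  · refine ⟨(-1 : F) ^ (k : ℕ), pow_ne_zero _ (neg_ne_zero.mpr one_ne_zero), ?_⟩
    rw [unip_eq, prod_filter_range]
    exact key_exact k (k : ℕ) le_rfl
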